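/- Let Rad be a root system in a finite-dimensional real inner product space V, let t be an involution of Rad, and let v be a regular vector. Then the following are equivalent: (i) (α,v)·(t(α),v) > 0 for every root α with t(α) ≠ ±α; (ii) (t(α),v) > 0 for every simple root α ∈ B(v) with t(α) ≠ ±α. -/

import Mathlib

open scoped RealInnerProductSpace

namespace PaperRS

variable {V : Type*} [NormedAddCommGroup V] [InnerProductSpace ℝ V]

/-- The reflection in a root `α`. -/
noncomputable def reflRoot (α x : V) : V := x - (2 * ⟪x, α⟫ / ⟪α, α⟫) • α

/-- `Rad` is a (reduced, crystallographic) root system in `V`. -/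
structure IsRootSystem (Rad : Set V) : Prop where
  finite : Rad.Finite
  nonzero : ∀ α ∈ Rad, α ≠ 0
  spanning : Submodule.span ℝ Rad = ⊤
  integral : ∀ α ∈ Rad, ∀ β ∈ Rad, ∃ n : ℤ, 2 * ⟪β, α⟫ / ⟪α, α⟫ = (n : ℝ)
  reflMem : ∀ α ∈ Rad, ∀ β ∈ Rad, reflRoot α β ∈ Rad
  reduced : ∀ α ∈ Rad, ∀ c : ℝ, c • α ∈ Rad → c = 1 ∨ c = -1

/-- Irreducibility: `Rad` is not the union of two nonempty mutually orthogonal subsets. -/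
def IsIrreducible (Rad : Set V) : Prop :=
  ¬ ∃ R₁ R₂ : Set V, R₁.Nonempty ∧ R₂.Nonempty ∧ Rad = R₁ ∪ R₂ ∧
      ∀ α ∈ R₁, ∀ β ∈ R₂, ⟪α, β⟫ = 0

/-- An involution of the root system `Rad`: an orthogonal linear automorphism `t` of `V`
with `t(Rad) = Rad` and `t ∘ t = id`. -/
structure IsInvolution (Rad : Set V) (t : V ≃ₗᵢ[ℝ] V) : Prop where
  maps : (⇑t) '' Rad = Rad
  invol : ∀ x : V, t (t x) = x

/-- Two roots are strongly orthogonal if neither their sum nor their difference is a root. -/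
def StronglyOrthogonal (Rad : Set V) (α β : V) : Prop :=
  α ≠ β ∧ α ≠ -β ∧ α + β ∉ Rad ∧ α - β ∉ Rad

/-- A vector is regular for `Rad` if it is orthogonal to no root. -/
def IsRegular (Rad : Set V) (v : V) : Prop := ∀ α ∈ Rad, ⟪α, v⟫ ≠ 0

/-- The positive roots determined by a regular vector `v`. -/
def posRoots (Rad : Set V) (v : V) : Set V := {α ∈ Rad | 0 < ⟪α, v⟫}

/-- The base of simple roots determined by a regular vector `v`: the positive roots which
are not sums of two positive roots. -/
def simpleBase (Rad : Set V) (v : V) : Set V :=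
  {α ∈ posRoots Rad v | ¬ ∃ β ∈ posRoots Rad v, ∃ γ ∈ posRoots Rad v, α = β + γ}

/-- A regular vector `v` is an S-chamber vector for an involution `t` if
`(α,v)·(t α,v) > 0` for every complex root `α` (i.e. every root with `t α ≠ ±α`). -/
def IsSChamber (Rad : Set V) (t : V ≃ₗᵢ[ℝ] V) (v : V) : Prop :=
  IsRegular Rad v ∧
    ∀ α ∈ Rad, t α ≠ α → t α ≠ -α → 0 < ⟪α, v⟫ * ⟪t α, v⟫

/-- `P ⊆ Rad` is parabolic if `P ∪ (-P) = Rad` and `P` is closed under root addition. -/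
def IsParabolic (Rad P : Set V) : Prop :=
  P ⊆ Rad ∧ (∀ α ∈ Rad, α ∈ P ∨ -α ∈ P) ∧
    ∀ α ∈ P, ∀ β ∈ P, α + β ∈ Rad → α + β ∈ P

/-- Composition `s_{β 0} ∘ s_{β 1} ∘ ⋯ ∘ s_{β (r-1)}` of the reflections in the roots
`β 0, …, β (r-1)`. -/
noncomputable def reflComp : (r : ℕ) → (Fin r → V) → V → V
  | 0, _ => id
  | r + 1, β => reflRoot (β 0) ∘ reflComp r (fun i => β i.succ)

/-- Auxiliary: every positive root lies in the additive monoid generated by the simple base. -/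
theorem posRoots_mem_closure (Rad : Set V) (hfin : Rad.Finite) (v : V) :
    ∀ α ∈ posRoots Rad v, α ∈ AddSubmonoid.closure (simpleBase Rad v) := by
  classical
  have hpfin : (posRoots Rad v).Finite := hfin.subset (fun x hx => hx.1)
  set F : Finset V := hpfin.toFinset with hF
  have hmemF : ∀ x, x ∈ F ↔ x ∈ posRoots Rad v := by
    intro x; simp [hF]
  suffices key : ∀ n : ℕ, ∀ α ∈ posRoots Rad v,
      (F.filter (fun x => ⟪x, v⟫ < ⟪α, v⟫)).card ≤ n →
      α ∈ AddSubmonoid.closure (simpleBase Rad v) by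
    intro α hα
    exact key _ α hα le_rfl
  intro n
  induction n with
  | zero =>
      intro α hα hcard
      by_cases hs : α ∈ simpleBase Rad v
      · exact AddSubmonoid.subset_closure hs
      · exfalso
        have : ∃ β ∈ posRoots Rad v, ∃ γ ∈ posRoots Rad v, α = β + γ := by
          by_contra h
          exact hs ⟨hα, h⟩
        obtain ⟨β, hβ, γ, hγ, hsum⟩ := this
        have hlt : ⟪β, v⟫ < ⟪α, v⟫ := by
          have : ⟪α, v⟫ = ⟪β, v⟫ + ⟪γ, v⟫ := by rw [hsum, inner_add_left]
          linarith [hγ.2]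
        have : β ∈ F.filter (fun x => ⟪x, v⟫ < ⟪α, v⟫) := by
          simp only [Finset.mem_filter]
          exact ⟨(hmemF β).2 hβ, hlt⟩
        have := Finset.card_pos.2 ⟨β, this⟩
        omega
  | succ n ih =>
      intro α hα hcard
      by_cases hs : α ∈ simpleBase Rad v
      · exact AddSubmonoid.subset_closure hs
      · have : ∃ β ∈ posRoots Rad v, ∃ γ ∈ posRoots Rad v, α = β + γ := by
          by_contra h
          exact hs ⟨hα, h⟩
        obtain ⟨β, hβ, γ, hγ, hsum⟩ := this
        have hsum' : ⟪α, v⟫ = ⟪β, v⟫ + ⟪γ, v⟫ := by rw [hsum, inner_add_left]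
        have hcl : ∀ δ ∈ posRoots Rad v, ⟪δ, v⟫ < ⟪α, v⟫ →
            δ ∈ AddSubmonoid.closure (simpleBase Rad v) := by
          intro δ hδ hlt
          apply ih δ hδ
          have hss : F.filter (fun x => ⟪x, v⟫ < ⟪δ, v⟫) ⊂
              F.filter (fun x => ⟪x, v⟫ < ⟪α, v⟫) := by
            constructor
            · intro x hx
              simp only [Finset.mem_filter] at hx ⊢
              exact ⟨hx.1, lt_trans hx.2 hlt⟩
            · intro hsub
              have hδmem : δ ∈ F.filter (fun x => ⟪x, v⟫ < ⟪α, v⟫) := by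
                simp only [Finset.mem_filter]
                exact ⟨(hmemF δ).2 hδ, hlt⟩
              have : δ ∈ F.filter (fun x => ⟪x, v⟫ < ⟪δ, v⟫) := hsub hδmem
              simp only [Finset.mem_filter] at this
              exact lt_irrefl _ this.2
          have := Finset.card_lt_card hss
          omega
        have hβc := hcl β hβ (by linarith [hγ.2])
        have hγc := hcl γ hγ (by linarith [hβ.2])
        rw [hsum]
        exact AddSubmonoid.add_mem _ hβc hγc

/-- Auxiliary: root systems are symmetric. -/
theorem neg_mem_of_mem (Rad : Set V) (hRS : IsRootSystem Rad) {α : V} (hα : α ∈ Rad) :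
    -α ∈ Rad := by
  have hαα : ⟪α, α⟫ ≠ (0 : ℝ) := inner_self_ne_zero.2 (hRS.nonzero α hα)
  have hm := hRS.reflMem α hα α hα
  have h2 : 2 * ⟪α, α⟫ / ⟪α, α⟫ = (2 : ℝ) := by field_simp
  have heq : reflRoot α α = -α := by
    rw [reflRoot, h2, two_smul]; abel
  rwa [heq] at hm

/-- the S-chamber condition holds for all complex roots iff it holds on the
complex simple roots, in the form `(t α, v) > 0`. -/
theorem stmt6 {V : Type*} [NormedAddCommGroup V] [InnerProductSpace ℝ V]
    [FiniteDimensional ℝ V] (Rad : Set V) (hRS : IsRootSystem Rad)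
    (t : V ≃ₗᵢ[ℝ] V) (ht : IsInvolution Rad t) (v : V) (hreg : IsRegular Rad v) :
    (∀ α ∈ Rad, t α ≠ α → t α ≠ -α → 0 < ⟪α, v⟫ * ⟪t α, v⟫) ↔
      (∀ α ∈ simpleBase Rad v, t α ≠ α → t α ≠ -α → 0 < ⟪t α, v⟫) := by
  constructor
  · intro h α hα htα htα'
    have hp := h α hα.1.1 htα htα'
    have hαv := hα.1.2
    nlinarith
  · intro h
    have htmem : ∀ x ∈ Rad, t x ∈ Rad := fun x hx =>
      ht.maps ▸ Set.mem_image_of_mem t hx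
    have hinner : ∀ x : V, ⟪x, v + t v⟫ = ⟪x, v⟫ + ⟪t x, v⟫ := by
      intro x
      rw [inner_add_right]
      congr 1
      calc ⟪x, t v⟫ = ⟪t x, t (t v)⟫ := (t.inner_map_map x (t v)).symm
        _ = ⟪t x, v⟫ := by rw [ht.invol]
    -- key property of elements of the closure of the simple base
    have main : ∀ x ∈ AddSubmonoid.closure (simpleBase Rad v),
        0 ≤ ⟪x, v + t v⟫ ∧ (⟪x, v + t v⟫ = 0 → t x = -x) := by
      intro x hx
      induction hx using AddSubmonoid.closure_induction with
      | mem β hβ =>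
          rw [hinner]
          have hβv : 0 < ⟪β, v⟫ := hβ.1.2
          by_cases h1 : t β = -β
          · constructor
            · rw [h1, inner_neg_left]; linarith
            · intro _; exact h1
          · have htv : 0 < ⟪t β, v⟫ := by
              by_cases h2 : t β = β
              · rw [h2]; exact hβv
              · exact h β hβ h2 h1
            exact ⟨by linarith, fun he => absurd he (by linarith)⟩
      | zero =>
          refine ⟨by simp, fun _ => by simp⟩
      | add x y hxm hym hx hy =>
          rw [inner_add_left] at *
          refine ⟨by linarith [hx.1, hy.1], fun he => ?_⟩
          have hx0 : ⟪x, v + t v⟫ = 0 := by linarith [hx.1, hy.1]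
          have hy0 : ⟪y, v + t v⟫ = 0 := by linarith [hx.1, hy.1]
          rw [map_add, hx.2 hx0, hy.2 hy0]
          abel
    -- the statement for positive complex roots
    have hpos : ∀ α ∈ Rad, t α ≠ α → t α ≠ -α → 0 < ⟪α, v⟫ → 0 < ⟪t α, v⟫ := by
      intro α hαR htα htα' hαv
      have hαcl : α ∈ AddSubmonoid.closure (simpleBase Rad v) :=
        posRoots_mem_closure Rad hRS.finite v α ⟨hαR, hαv⟩
      obtain ⟨hge, himp⟩ := main α hαcl
      have hwpos : 0 < ⟪α, v + t v⟫ := by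
        rcases lt_or_eq_of_le hge with h' | h'
        · exact h'
        · exact absurd (himp h'.symm) htα'
      have htαR : t α ∈ Rad := htmem α hαR
      have htαv : ⟪t α, v⟫ ≠ 0 := hreg (t α) htαR
      rcases lt_trichotomy (⟪t α, v⟫ : ℝ) 0 with hlt | he | hgt
      · exfalso
        have hneg : -(t α) ∈ posRoots Rad v := by
          refine ⟨neg_mem_of_mem Rad hRS htαR, ?_⟩
          rw [inner_neg_left]; linarith
        have hcl := posRoots_mem_closure Rad hRS.finite v _ hneg
        have := (main _ hcl).1
        rw [inner_neg_left, hinner, ht.invol] at this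
        rw [hinner] at hwpos
        linarith
      · exact absurd he htαv
      · exact hgt
    intro α hαR htα htα'
    rcases lt_trichotomy (⟪α, v⟫ : ℝ) 0 with hlt | he | hgt
    · have hnegR : -α ∈ Rad := neg_mem_of_mem Rad hRS hαR
      have h1 : t (-α) ≠ -α := by
        rw [map_neg]
        intro hc
        exact htα (neg_injective hc)
      have h2 : t (-α) ≠ -(-α) := by
        rw [map_neg, neg_neg]
        intro hc
        exact htα' (neg_eq_iff_eq_neg.mp hc)
      have h3 : 0 < ⟪-α, v⟫ := by rw [inner_neg_left]; linarith
      have := hpos (-α) hnegR h1 h2 h3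
      rw [map_neg, inner_neg_left] at this
      have h4 : ⟪t α, v⟫ < 0 := by linarith
      nlinarith
    · exact absurd he (hreg α hαR)
    · exact mul_pos hgt (hpos α hαR htα htα' hgt)

end PaperRS
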